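/- arXiv:2506.14172 — 3 statements merged into one kernel-verified Lean document; each statement's English description precedes it below -/
import Mathlib

section
/- Let α, σ ∈ (0,1] and let k ∈ ℕ be such that e_{k−1}(z^α) ≠ 0 for all z ∈ Ω. Then ‖·‖_{α,k,σ} is a norm on the complex vector space D^σ_{α,k}; explicitly: (i) if f ∈ D^σ_{α,k} and ‖f‖_{α,k,σ} = 0 then f(z) = 0 for all z ∈ Ω; (ii) ‖a·f‖_{α,k,σ} = |a|·‖f‖_{α,k,σ} for all a ∈ ℂ and f ∈ D^σ_{α,k}; (iii) ‖f+g‖_{α,k,σ} ≤ ‖f‖_{α,k,σ} + ‖g‖_{α,k,σ} for all f, g ∈ D^σ_{α,k}. -/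
open MeasureTheory Complex

noncomputable section

/-- The unit disk minus the real segment `(-1, 0]`. -/
def Omega : Set ℂ :=
  {z : ℂ | ‖z‖ < 1 ∧ ¬ (z.im = 0 ∧ -1 < z.re ∧ z.re ≤ 0)}

/-- The truncated exponential `e_k(w) = ∑_{n=0}^k w^n / n!`. -/
def ek (k : ℕ) (w : ℂ) : ℂ := ∑ n ∈ Finset.range (k + 1), w ^ n / (n.factorial : ℂ)

/-- The generalized fractal-fractional derivative
`D^σ_{α,k} f(z) = (1-σ) f(z) + σ f'(z)/(α z^{α-1} e_{k-1}(z^α))`. -/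
def Dfrac (α σ : ℝ) (k : ℕ) (f : ℂ → ℂ) (z : ℂ) : ℂ :=
  (1 - (σ : ℂ)) * f z +
    (σ : ℂ) * deriv f z / ((α : ℂ) * z ^ ((α : ℂ) - 1) * ek (k - 1) (z ^ (α : ℂ)))

/-- The Dirichlet-type norm `‖f‖_{α,k,σ}`. -/
def Dnorm (α σ : ℝ) (k : ℕ) (f : ℂ → ℂ) : ℝ :=
  Real.sqrt (α * ‖f (1 / 2)‖ ^ 2 + ∫ z in Omega, ‖Dfrac α σ k f z‖ ^ 2)

/-- Membership in the Dirichlet-type space `D^σ_{α,k}`: holomorphic on `Ω` with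
finite Dirichlet-type integral. -/
def MemD (α σ : ℝ) (k : ℕ) (f : ℂ → ℂ) : Prop :=
  DifferentiableOn ℂ f Omega ∧ IntegrableOn (fun z => ‖Dfrac α σ k f z‖ ^ 2) Omega

lemma omega_eq : Omega = {z : ℂ | ‖z‖ < 1} ∩ {z : ℂ | z.im = 0 ∧ z.re ≤ 0}ᶜ := by
  ext z
  simp only [Omega, Set.mem_setOf_eq, Set.mem_inter_iff, Set.mem_compl_iff]
  constructor
  · rintro ⟨h1, h2⟩
    refine ⟨h1, fun h => h2 ⟨h.1, ?_, h.2⟩⟩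
    have := (abs_lt.1 (lt_of_le_of_lt (Complex.abs_re_le_norm z) h1)).1
    linarith
  · rintro ⟨h1, h2⟩
    exact ⟨h1, fun h => h2 ⟨h.1, h.2.2⟩⟩

lemma omega_isOpen : IsOpen Omega := by
  rw [omega_eq]
  exact (isOpen_Iio.preimage continuous_norm).inter
    ((isClosed_singleton.preimage Complex.continuous_im).inter
      (isClosed_Iic.preimage Complex.continuous_re)).isOpen_compl

lemma half_mem_omega : (1 / 2 : ℂ) ∈ Omega := by
  constructor
  · have : ‖((1:ℂ)/2)‖ = 1/2 := by
      rw [norm_div, norm_one, Complex.norm_two]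
    rw [this]; norm_num
  · intro h
    have : ((1:ℂ)/2).re = 1/2 := by norm_num
    rw [this] at h
    linarith [h.2.2]

lemma mem_slitPlane_of_mem {z : ℂ} (hz : z ∈ Omega) : z ∈ Complex.slitPlane := by
  rw [Complex.mem_slitPlane_iff]
  rcases hz with ⟨h1, h2⟩
  by_cases him : z.im = 0
  · left
    have := (abs_lt.1 (lt_of_le_of_lt (Complex.abs_re_le_norm z) h1)).1
    by_contra hre
    exact h2 ⟨him, this, le_of_not_gt hre⟩
  · right; exact him

lemma ne_zero_of_mem {z : ℂ} (hz : z ∈ Omega) : z ≠ 0 := by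
  intro h
  have := mem_slitPlane_of_mem hz
  rw [h] at this
  exact Complex.zero_notMem_slitPlane this

lemma omega_starConvex : StarConvex ℝ (1/2 : ℂ) Omega := by
  intro z hz a b ha hb hab
  have habs : ‖z‖ < 1 := hz.1
  have hre1 : -1 < z.re := by
    have := (abs_lt.1 (lt_of_le_of_lt (Complex.abs_re_le_norm z) habs)).1; linarith
  set w := a • (1/2 : ℂ) + b • z with hw
  have hwre : w.re = a * (1/2) + b * z.re := by
    simp only [hw, Complex.add_re, Complex.smul_re]; norm_num
  have hwim : w.im = b * z.im := by
    simp only [hw, Complex.add_im, Complex.smul_im]; norm_num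
  constructor
  · have habs2 : ‖w‖ ≤ a * (1/2) + b * ‖z‖ := by
      have h2 : ‖((1:ℂ)/2)‖ = 1/2 := by
        rw [norm_div, norm_one, Complex.norm_two]
      calc ‖w‖ ≤ ‖(a • (1/2:ℂ))‖ + ‖(b • z)‖ :=
            norm_add_le _ _
        _ = a * (1/2) + b * ‖z‖ := by
            rw [norm_smul, norm_smul, Real.norm_of_nonneg ha,
              Real.norm_of_nonneg hb, h2]
    refine lt_of_le_of_lt habs2 ?_
    rcases eq_or_lt_of_le ha with h | h
    · rw [← h] at hab ⊢; simp at hab; rw [hab]; simpa using habs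
    · nlinarith
  · rintro ⟨h1, h2, h3⟩
    rw [hwim] at h1
    rw [hwre] at h3
    rcases mul_eq_zero.1 h1 with hb0 | him
    · have hb0 : b = 0 := hb0
      rw [hb0] at h3 hab; simp at hab; rw [hab] at h3; norm_num at h3
    · -- z.im = 0, so z.re > 0
      have hzre : 0 < z.re := by
        by_contra hre
        exact hz.2 ⟨him, hre1, le_of_not_gt hre⟩
      have h50 : 0 < a * (1/2) + b * z.re := by
        rcases eq_or_lt_of_le ha with h | h
        · rw [← h] at hab ⊢; simp at hab; rw [hab]; simpa using hzre
        · nlinarith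
      linarith

lemma omega_preconnected : IsPreconnected Omega := by
  apply isPreconnected_of_forall (1/2 : ℂ)
  intro y hy
  exact ⟨segment ℝ (1/2 : ℂ) y, omega_starConvex.segment_subset hy,
    left_mem_segment _ _ _, right_mem_segment _ _ _, (convex_segment _ _).isPreconnected⟩


def den (α : ℝ) (k : ℕ) (z : ℂ) : ℂ := (α : ℂ) * z ^ ((α : ℂ) - 1) * ek (k - 1) (z ^ (α : ℂ))

lemma Dfrac_eq (α σ : ℝ) (k : ℕ) (f : ℂ → ℂ) (z : ℂ) :
    Dfrac α σ k f z = (1 - (σ : ℂ)) * f z + (σ : ℂ) * deriv f z / den α k z := rfl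

lemma ek_continuous (k : ℕ) : Continuous (ek k) := by
  unfold ek
  exact continuous_finset_sum _ fun n _ => ((continuous_pow n).div_const _)

lemma continuousOn_den (α : ℝ) (k : ℕ) : ContinuousOn (den α k) Omega := by
  have h1 : ContinuousOn (fun z : ℂ => z ^ ((α : ℂ) - 1)) Omega := fun z hz =>
    (continuousAt_cpow_const (mem_slitPlane_of_mem hz)).continuousWithinAt
  have h2 : ContinuousOn (fun z : ℂ => z ^ (α : ℂ)) Omega := fun z hz =>
    (continuousAt_cpow_const (mem_slitPlane_of_mem hz)).continuousWithinAt
  exact (continuousOn_const.mul h1).mul ((ek_continuous (k-1)).comp_continuousOn h2)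

lemma den_ne_zero {α : ℝ} (hα : 0 < α) {k : ℕ}
    (hk : ∀ z ∈ Omega, ek (k - 1) (z ^ (α : ℂ)) ≠ 0) {z : ℂ} (hz : z ∈ Omega) :
    den α k z ≠ 0 := by
  apply mul_ne_zero (mul_ne_zero _ _) (hk z hz)
  · exact_mod_cast hα.ne'
  · intro h
    exact ne_zero_of_mem hz ((Complex.cpow_eq_zero_iff _ _).1 h).1

lemma continuousOn_Dfrac {α : ℝ} (σ : ℝ) (hα : 0 < α) {k : ℕ}
    (hk : ∀ z ∈ Omega, ek (k - 1) (z ^ (α : ℂ)) ≠ 0) {f : ℂ → ℂ}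
    (hf : DifferentiableOn ℂ f Omega) : ContinuousOn (Dfrac α σ k f) Omega := by
  have hderiv : ContinuousOn (deriv f) Omega :=
    ((hf.analyticOnNhd omega_isOpen).deriv.differentiableOn).continuousOn
  exact (continuousOn_const.mul hf.continuousOn).add
    ((continuousOn_const.mul hderiv).div (continuousOn_den α k)
      fun z hz => den_ne_zero hα hk hz)

lemma Dfrac_smul (α σ : ℝ) (k : ℕ) (a : ℂ) (f : ℂ → ℂ) (z : ℂ) :
    Dfrac α σ k (fun w => a * f w) z = a * Dfrac α σ k f z := by
  simp only [Dfrac, deriv_const_mul_field]; ring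

lemma Dfrac_add (α σ : ℝ) (k : ℕ) {f g : ℂ → ℂ} {z : ℂ}
    (hf : DifferentiableAt ℂ f z) (hg : DifferentiableAt ℂ g z) :
    Dfrac α σ k (fun w => f w + g w) z = Dfrac α σ k f z + Dfrac α σ k g z := by
  simp only [Dfrac, deriv_fun_add hf hg]; ring


def G (α : ℝ) (k : ℕ) (z : ℂ) : ℂ :=
  ∑ n ∈ Finset.range ((k - 1) + 1), (z ^ (α : ℂ)) ^ (n + 1) / ((n + 1).factorial : ℂ)

lemma hasDerivAt_G {α : ℝ} (k : ℕ) {z : ℂ} (hz : z ∈ Complex.slitPlane) :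
    HasDerivAt (G α k) (den α k z) z := by
  have h1 : HasDerivAt (fun z : ℂ => z ^ (α : ℂ)) ((α : ℂ) * z ^ ((α : ℂ) - 1)) z :=
    (Complex.hasStrictDerivAt_cpow_const hz).hasDerivAt
  have hsum : HasDerivAt (G α k)
      (∑ n ∈ Finset.range ((k - 1) + 1),
        ((n + 1 : ℕ) : ℂ) * (z ^ (α : ℂ)) ^ (n + 1 - 1) * ((α : ℂ) * z ^ ((α : ℂ) - 1)) /
          ((n + 1).factorial : ℂ)) z :=
    HasDerivAt.fun_sum fun n _ => (h1.pow (n + 1)).div_const _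
  convert hsum using 1
  rw [den, ek, mul_assoc, Finset.mul_sum, Finset.mul_sum]
  apply Finset.sum_congr rfl
  intro n _
  have hfac : (((n + 1).factorial : ℕ) : ℂ) = ((n + 1 : ℕ) : ℂ) * (n.factorial : ℂ) := by
    rw [Nat.factorial_succ]; push_cast; ring
  have h2 : ((n + 1 : ℕ) : ℂ) ≠ 0 := Nat.cast_ne_zero.2 (Nat.succ_ne_zero n)
  have h3 : (n.factorial : ℂ) ≠ 0 := Nat.cast_ne_zero.2 n.factorial_ne_zero
  rw [hfac]
  simp only [Nat.add_sub_cancel]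
  rw [eq_div_iff (mul_ne_zero h2 h3)]
  field_simp

lemma part_i_core {α σ : ℝ} (hα : α ∈ Set.Ioc (0 : ℝ) 1) (hσ : σ ∈ Set.Ioc (0 : ℝ) 1) {k : ℕ}
    (hk : ∀ z ∈ Omega, ek (k - 1) (z ^ (α : ℂ)) ≠ 0) {f : ℂ → ℂ}
    (hf : DifferentiableOn ℂ f Omega)
    (hD : ∀ z ∈ Omega, Dfrac α σ k f z = 0) (hf12 : f (1 / 2) = 0) :
    ∀ z ∈ Omega, f z = 0 := by
  have hσ0 : (σ : ℂ) ≠ 0 := Complex.ofReal_ne_zero.2 hσ.1.ne'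
  set c : ℂ → ℂ := fun z => -(((1 : ℂ) - σ) / σ) * den α k z with hc
  have hODE : ∀ z ∈ Omega, HasDerivAt f (c z * f z) z := by
    intro z hz
    have hd : DifferentiableAt ℂ f z := hf.differentiableAt (omega_isOpen.mem_nhds hz)
    have h0 := hD z hz
    rw [Dfrac_eq] at h0
    have hden := den_ne_zero hα.1 hk hz
    have hderiv : deriv f z = c z * f z := by
      rw [hc]
      field_simp [hden] at h0
      field_simp
      linear_combination h0
    rw [← hderiv]
    exact hd.hasDerivAt
  set g : ℂ → ℂ := fun z => -(((1 : ℂ) - σ) / σ) * G α k z with hg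
  have hgD : ∀ z ∈ Omega, HasDerivAt g (c z) z := fun z hz =>
    (hasDerivAt_G k (mem_slitPlane_of_mem hz)).const_mul _
  set h : ℂ → ℂ := fun z => f z * Complex.exp (-g z) with hh
  have hhD : ∀ z ∈ Omega, HasDerivAt h 0 z := by
    intro z hz
    have h2 : HasDerivAt (fun z => Complex.exp (-g z)) (Complex.exp (-g z) * -c z) z :=
      ((hgD z hz).neg).cexp
    have h3 := (hODE z hz).fun_mul h2
    rw [show (0:ℂ) = c z * f z * Complex.exp (-g z) + f z * (Complex.exp (-g z) * -c z) by ring]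
    exact h3
  have hdiffh : DifferentiableOn ℂ h Omega := fun z hz =>
    ((hhD z hz).differentiableAt).differentiableWithinAt
  obtain ⟨r, hr0, hrball⟩ := Metric.isOpen_iff.1 omega_isOpen _ half_mem_omega
  have hconst : ∀ x ∈ Metric.ball (1 / 2 : ℂ) r, h x = h (1 / 2) := by
    intro x hx
    refine (convex_ball _ _).is_const_of_fderivWithin_eq_zero
      (fun y hy => ((hhD y (hrball hy)).differentiableAt).differentiableWithinAt)
      (fun y hy => ?_) hx (Metric.mem_ball_self hr0)
    rw [fderivWithin_of_isOpen Metric.isOpen_ball hy,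
      ((hhD y (hrball hy)).hasFDerivAt).fderiv]
    exact ContinuousLinearMap.ext fun w => by simp
  have hev : h =ᶠ[nhds (1 / 2 : ℂ)] fun _ => h (1 / 2) :=
    Filter.eventuallyEq_of_mem (Metric.ball_mem_nhds _ hr0) hconst
  intro z hz
  have hzero : h z = h (1 / 2) :=
    (hdiffh.analyticOnNhd omega_isOpen).eqOn_of_preconnected_of_eventuallyEq
      analyticOnNhd_const omega_preconnected half_mem_omega hev hz
  have : h (1 / 2) = 0 := by simp only [hh]; rw [hf12, zero_mul]
  rw [this] at hzero
  exact (mul_eq_zero.1 hzero).resolve_right (Complex.exp_ne_zero _)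


lemma eqOn_zero_of_ae {N : ℂ → ℝ} (hc : ContinuousOn N Omega)
    (hae : ∀ᵐ z ∂(volume.restrict Omega), N z = 0) : ∀ z ∈ Omega, N z = 0 := by
  intro z hz
  by_contra hN
  have hU : IsOpen (Omega ∩ N ⁻¹' {(0:ℝ)}ᶜ) :=
    hc.isOpen_inter_preimage omega_isOpen (isOpen_compl_iff.2 isClosed_singleton)
  obtain ⟨r, hr0, hball⟩ := Metric.isOpen_iff.1 hU z ⟨hz, hN⟩
  have h0 : volume.restrict Omega {w | ¬ N w = 0} = 0 := ae_iff.1 hae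
  rw [Measure.restrict_apply' omega_isOpen.measurableSet] at h0
  have hsub : Metric.ball z r ⊆ {w | ¬ N w = 0} ∩ Omega := fun w hw =>
    ⟨(hball hw).2, (hball hw).1⟩
  have : volume (Metric.ball z r) = 0 := measure_mono_null hsub h0
  exact absurd this (Metric.measure_ball_pos volume z hr0).ne'

lemma cauchy_schwarz_omega {u v : ℂ → ℝ}
    (hu : AEStronglyMeasurable u (volume.restrict Omega))
    (hv : AEStronglyMeasurable v (volume.restrict Omega))
    (hu2 : IntegrableOn (fun z => u z ^ 2) Omega)
    (hv2 : IntegrableOn (fun z => v z ^ 2) Omega)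
    (hun : ∀ z, 0 ≤ u z) (hvn : ∀ z, 0 ≤ v z) :
    ∫ z in Omega, u z * v z ≤
      Real.sqrt (∫ z in Omega, u z ^ 2) * Real.sqrt (∫ z in Omega, v z ^ 2) := by
  have hpq : (2 : ℝ).HolderConjugate 2 := Real.HolderConjugate.two_two
  have hmu : MemLp u (ENNReal.ofReal 2) (volume.restrict Omega) := by
    rw [show ENNReal.ofReal 2 = 2 by norm_num]
    exact (memLp_two_iff_integrable_sq hu).2 hu2
  have hmv : MemLp v (ENNReal.ofReal 2) (volume.restrict Omega) := by
    rw [show ENNReal.ofReal 2 = 2 by norm_num]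
    exact (memLp_two_iff_integrable_sq hv).2 hv2
  have := MeasureTheory.integral_mul_le_Lp_mul_Lq_of_nonneg hpq
    (Filter.Eventually.of_forall hun) (Filter.Eventually.of_forall hvn) hmu hmv
  have hru : ∀ z : ℂ, u z ^ (2 : ℝ) = u z ^ 2 := fun z => by
    rw [show (2:ℝ) = ((2:ℕ):ℝ) by norm_num, Real.rpow_natCast]
  have hrv : ∀ z : ℂ, v z ^ (2 : ℝ) = v z ^ 2 := fun z => by
    rw [show (2:ℝ) = ((2:ℕ):ℝ) by norm_num, Real.rpow_natCast]
  simp only [hru, hrv] at this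
  rw [Real.sqrt_eq_rpow, Real.sqrt_eq_rpow]
  simpa using this



theorem Dnorm_is_a_norm
    (α σ : ℝ) (hα : α ∈ Set.Ioc (0 : ℝ) 1) (hσ : σ ∈ Set.Ioc (0 : ℝ) 1) (k : ℕ)
    (hk : ∀ z ∈ Omega, ek (k - 1) (z ^ (α : ℂ)) ≠ 0) :
    (∀ f : ℂ → ℂ, MemD α σ k f → Dnorm α σ k f = 0 → ∀ z ∈ Omega, f z = 0) ∧
    (∀ (a : ℂ) (f : ℂ → ℂ), MemD α σ k f →
        Dnorm α σ k (fun z => a * f z) = ‖a‖ * Dnorm α σ k f) ∧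
    (∀ f g : ℂ → ℂ, MemD α σ k f → MemD α σ k g →
        Dnorm α σ k (fun z => f z + g z) ≤ Dnorm α σ k f + Dnorm α σ k g) := by
  refine ⟨?_, ?_, ?_⟩
  · -- (i) definiteness
    intro f hf h0 z hz
    have hInn : (0:ℝ) ≤ ∫ w in Omega, ‖Dfrac α σ k f w‖ ^ 2 :=
      integral_nonneg fun w => sq_nonneg _
    rw [Dnorm] at h0
    have hsum : α * ‖f (1 / 2)‖ ^ 2 + (∫ w in Omega, ‖Dfrac α σ k f w‖ ^ 2) ≤ 0 :=
      Real.sqrt_eq_zero'.1 h0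
    have hnn : (0:ℝ) ≤ α * ‖f (1 / 2)‖ ^ 2 := mul_nonneg hα.1.le (sq_nonneg _)
    have hf12 : f (1 / 2) = 0 := by
      have hsq : ‖f (1 / 2)‖ ^ 2 ≤ 0 := by nlinarith [hα.1, sq_nonneg ‖f (1/2:ℂ)‖]
      have h2 : ‖f (1 / 2)‖ ^ 2 = 0 := le_antisymm hsq (sq_nonneg _)
      exact norm_eq_zero.1 (pow_eq_zero_iff two_ne_zero |>.1 h2)
    have hI0 : (∫ w in Omega, ‖Dfrac α σ k f w‖ ^ 2) = 0 := le_antisymm (by linarith) hInn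
    have hae := (setIntegral_eq_zero_iff_of_nonneg_ae
      (Filter.Eventually.of_forall fun w => sq_nonneg _) hf.2).1 hI0
    have hcont : ContinuousOn (fun w => ‖Dfrac α σ k f w‖ ^ 2) Omega :=
      ((continuousOn_Dfrac σ hα.1 hk hf.1).norm).pow 2
    have hzero := eqOn_zero_of_ae hcont (hae.mono fun w hw => by simpa using hw)
    have hDzero : ∀ w ∈ Omega, Dfrac α σ k f w = 0 := fun w hw =>
      norm_eq_zero.1 (pow_eq_zero_iff two_ne_zero |>.1 (hzero w hw))
    exact part_i_core hα hσ hk hf.1 hDzero hf12 z hz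
  · -- (ii) homogeneity
    intro a f hf
    rw [Dnorm, Dnorm]
    have hDs : ∀ z, Dfrac α σ k (fun w => a * f w) z = a * Dfrac α σ k f z := Dfrac_smul α σ k a f
    simp only [hDs, norm_mul, mul_pow]
    rw [integral_const_mul]
    rw [show α * (‖a‖ ^ 2 * ‖f (1/2 : ℂ)‖ ^ 2) +
        ‖a‖ ^ 2 * (∫ z in Omega, ‖Dfrac α σ k f z‖ ^ 2) =
        ‖a‖ ^ 2 * (α * ‖f (1/2 : ℂ)‖ ^ 2 + ∫ z in Omega, ‖Dfrac α σ k f z‖ ^ 2) from by ring]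
    rw [Real.sqrt_mul (sq_nonneg _), Real.sqrt_sq (norm_nonneg a)]
  · -- (iii) triangle inequality
    intro f g hf hg
    have hcf : ContinuousOn (Dfrac α σ k f) Omega := continuousOn_Dfrac σ hα.1 hk hf.1
    have hcg : ContinuousOn (Dfrac α σ k g) Omega := continuousOn_Dfrac σ hα.1 hk hg.1
    have humeas : AEStronglyMeasurable (fun z => ‖Dfrac α σ k f z‖) (volume.restrict Omega) :=
      (hcf.aestronglyMeasurable omega_isOpen.measurableSet).norm
    have hvmeas : AEStronglyMeasurable (fun z => ‖Dfrac α σ k g z‖) (volume.restrict Omega) :=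
      (hcg.aestronglyMeasurable omega_isOpen.measurableSet).norm
    have hu2 : IntegrableOn (fun z => ‖Dfrac α σ k f z‖ ^ 2) Omega := hf.2
    have hv2 : IntegrableOn (fun z => ‖Dfrac α σ k g z‖ ^ 2) Omega := hg.2
    have huv : IntegrableOn (fun z => ‖Dfrac α σ k f z‖ * ‖Dfrac α σ k g z‖) Omega := by
      apply Integrable.mono' ((hu2.add hv2).div_const 2) (humeas.mul hvmeas)
      filter_upwards with z
      simp only [Pi.mul_apply, Pi.add_apply]
      rw [Real.norm_of_nonneg (mul_nonneg (norm_nonneg _) (norm_nonneg _))]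
      nlinarith [sq_nonneg (‖Dfrac α σ k f z‖ - ‖Dfrac α σ k g z‖)]
    have hCS := cauchy_schwarz_omega humeas hvmeas hu2 hv2
      (fun z => norm_nonneg _) (fun z => norm_nonneg _)
    have hsum2 : IntegrableOn (fun z => (‖Dfrac α σ k f z‖ + ‖Dfrac α σ k g z‖) ^ 2) Omega := by
      have heq : (fun z => (‖Dfrac α σ k f z‖ + ‖Dfrac α σ k g z‖) ^ 2) =
          fun z => ‖Dfrac α σ k f z‖ ^ 2 +
            (2 * (‖Dfrac α σ k f z‖ * ‖Dfrac α σ k g z‖) + ‖Dfrac α σ k g z‖ ^ 2) :=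
        funext fun z => by ring
      rw [heq]; exact hu2.add ((huv.const_mul 2).add hv2)
    have hexp : (∫ z in Omega, (‖Dfrac α σ k f z‖ + ‖Dfrac α σ k g z‖) ^ 2) =
        (∫ z in Omega, ‖Dfrac α σ k f z‖ ^ 2) +
          (2 * (∫ z in Omega, ‖Dfrac α σ k f z‖ * ‖Dfrac α σ k g z‖) +
            ∫ z in Omega, ‖Dfrac α σ k g z‖ ^ 2) := by
      calc (∫ z in Omega, (‖Dfrac α σ k f z‖ + ‖Dfrac α σ k g z‖) ^ 2) =
          ∫ z in Omega, (‖Dfrac α σ k f z‖ ^ 2 +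
            (2 * (‖Dfrac α σ k f z‖ * ‖Dfrac α σ k g z‖) + ‖Dfrac α σ k g z‖ ^ 2)) := by
            apply integral_congr_ae; filter_upwards with z; ring
        _ = _ := by
            have h2u : IntegrableOn (fun z => 2 * (‖Dfrac α σ k f z‖ * ‖Dfrac α σ k g z‖))
                Omega := huv.const_mul 2
            have h2v : IntegrableOn (fun z => 2 * (‖Dfrac α σ k f z‖ * ‖Dfrac α σ k g z‖) +
                ‖Dfrac α σ k g z‖ ^ 2) Omega := h2u.add hv2
            rw [integral_add hu2 h2v, integral_add h2u hv2, integral_const_mul]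
    have hDadd : ∀ z ∈ Omega, Dfrac α σ k (fun w => f w + g w) z =
        Dfrac α σ k f z + Dfrac α σ k g z := fun z hz =>
      Dfrac_add α σ k (hf.1.differentiableAt (omega_isOpen.mem_nhds hz))
        (hg.1.differentiableAt (omega_isOpen.mem_nhds hz))
    have hle : (∫ z in Omega, ‖Dfrac α σ k (fun w => f w + g w) z‖ ^ 2) ≤
        ∫ z in Omega, (‖Dfrac α σ k f z‖ + ‖Dfrac α σ k g z‖) ^ 2 := by
      rw [setIntegral_congr_fun omega_isOpen.measurableSet
        (show Set.EqOn (fun z => ‖Dfrac α σ k (fun w => f w + g w) z‖ ^ 2)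
          (fun z => ‖Dfrac α σ k f z + Dfrac α σ k g z‖ ^ 2) Omega from
          fun z hz => by
            show ‖Dfrac α σ k (fun w => f w + g w) z‖ ^ 2 =
              ‖Dfrac α σ k f z + Dfrac α σ k g z‖ ^ 2
            rw [hDadd z hz])]
      have hint : IntegrableOn (fun z => ‖Dfrac α σ k f z + Dfrac α σ k g z‖ ^ 2) Omega := by
        apply Integrable.mono' hsum2
          (((hcf.add hcg).norm.pow 2).aestronglyMeasurable omega_isOpen.measurableSet)
        filter_upwards [ae_restrict_mem omega_isOpen.measurableSet] with z hz
        show ‖‖Dfrac α σ k f z + Dfrac α σ k g z‖ ^ 2‖ ≤ _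
        rw [Real.norm_of_nonneg (sq_nonneg _)]
        have h1 := norm_add_le (Dfrac α σ k f z) (Dfrac α σ k g z)
        nlinarith [norm_nonneg (Dfrac α σ k f z + Dfrac α σ k g z),
          norm_nonneg (Dfrac α σ k f z), norm_nonneg (Dfrac α σ k g z)]
      apply setIntegral_mono_on hint hsum2 omega_isOpen.measurableSet
      intro z hz
      have h1 := norm_add_le (Dfrac α σ k f z) (Dfrac α σ k g z)
      nlinarith [norm_nonneg (Dfrac α σ k f z + Dfrac α σ k g z),
        norm_nonneg (Dfrac α σ k f z), norm_nonneg (Dfrac α σ k g z)]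
    -- numeric assembly
    rw [Dnorm, Dnorm, Dnorm]
    set A := ‖f (1/2 : ℂ)‖ with hA
    set B := ‖g (1/2 : ℂ)‖ with hB
    set Iu := ∫ z in Omega, ‖Dfrac α σ k f z‖ ^ 2 with hIu
    set Iv := ∫ z in Omega, ‖Dfrac α σ k g z‖ ^ 2 with hIv
    have hA0 : 0 ≤ A := norm_nonneg _
    have hB0 : 0 ≤ B := norm_nonneg _
    have hIu0 : 0 ≤ Iu := integral_nonneg fun z => sq_nonneg _
    have hIv0 : 0 ≤ Iv := integral_nonneg fun z => sq_nonneg _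
    have hP0 : 0 ≤ α * A ^ 2 + Iu := add_nonneg (mul_nonneg hα.1.le (sq_nonneg A)) hIu0
    have hQ0 : 0 ≤ α * B ^ 2 + Iv := add_nonneg (mul_nonneg hα.1.le (sq_nonneg B)) hIv0
    have key : α * (A * B) + Real.sqrt Iu * Real.sqrt Iv ≤
        Real.sqrt (α * A ^ 2 + Iu) * Real.sqrt (α * B ^ 2 + Iv) := by
      rw [← Real.sqrt_mul hP0]
      rw [Real.le_sqrt (add_nonneg (mul_nonneg hα.1.le (mul_nonneg hA0 hB0))
        (mul_nonneg (Real.sqrt_nonneg _) (Real.sqrt_nonneg _))) (mul_nonneg hP0 hQ0)]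
      nlinarith [mul_nonneg hα.1.le (sq_nonneg (A * Real.sqrt Iv - B * Real.sqrt Iu)),
        Real.sq_sqrt hIu0, Real.sq_sqrt hIv0, Real.sqrt_nonneg Iu, Real.sqrt_nonneg Iv,
        hα.1, mul_nonneg hA0 hB0, mul_nonneg (Real.sqrt_nonneg Iu) (Real.sqrt_nonneg Iv)]
    have hA' : ‖f (1/2 : ℂ) + g (1/2 : ℂ)‖ ≤ A + B := norm_add_le _ _
    have hfinal : α * ‖f (1/2 : ℂ) + g (1/2 : ℂ)‖ ^ 2 +
        (∫ z in Omega, ‖Dfrac α σ k (fun w => f w + g w) z‖ ^ 2) ≤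
        (Real.sqrt (α * A ^ 2 + Iu) + Real.sqrt (α * B ^ 2 + Iv)) ^ 2 := by
      have h2 : (∫ z in Omega, ‖Dfrac α σ k (fun w => f w + g w) z‖ ^ 2) ≤
          Iu + (2 * (Real.sqrt Iu * Real.sqrt Iv) + Iv) := by
        rw [hexp] at hle
        linarith [hle, hCS]
      have h3 : α * ‖f (1/2 : ℂ) + g (1/2 : ℂ)‖ ^ 2 ≤ α * (A + B) ^ 2 := by
        apply mul_le_mul_of_nonneg_left _ hα.1.le
        exact pow_le_pow_left₀ (norm_nonneg _) hA' 2
      nlinarith [key, Real.sq_sqrt hP0, Real.sq_sqrt hQ0,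
        Real.sqrt_nonneg (α * A ^ 2 + Iu), Real.sqrt_nonneg (α * B ^ 2 + Iv)]
    calc Real.sqrt (α * ‖f (1/2 : ℂ) + g (1/2 : ℂ)‖ ^ 2 +
          ∫ z in Omega, ‖Dfrac α σ k (fun w => f w + g w) z‖ ^ 2) ≤
        Real.sqrt ((Real.sqrt (α * A ^ 2 + Iu) + Real.sqrt (α * B ^ 2 + Iv)) ^ 2) :=
          Real.sqrt_le_sqrt hfinal
      _ = _ := Real.sqrt_sq (by positivity)
end
end

section
/- Reproducing property, first form: let α ∈ (0,1], σ ∈ (0,1) and let k ∈ ℕ be such that e_{k−1}(z^α) ≠ 0 for all z ∈ Ω. Let f be holomorphic on 𝔻 and suppose the function D^σ_{α,k} f (defined on Ω) extends to a holomorphic function g on all of 𝔻 with ∫_𝔻 |g|² dA < ∞ (i.e. g belongs to the Bergman space of 𝔻). Then for every z ∈ Ω, f(z) = −(σ/(1−σ)) · f′(z)/(α·z^{α−1}·e_{k−1}(z^α)) + (1/(1−σ)) · ∫_𝔻 B(z,ζ)·g(ζ) dA(ζ), where B(z,ζ) := 1/(π·(1 − z·conj(ζ))²) is the Bergman kernel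 of 𝔻. -/
open MeasureTheory Complex

noncomputable section

/-- The open unit disk. -/
def unitDisk : Set ℂ := {z : ℂ | ‖z‖ < 1}

/-- The Bergman kernel of the unit disk, `B(z,ζ) = 1/(π (1 - z conj ζ)²)`. -/
def bergman (z ζ : ℂ) : ℂ := 1 / ((Real.pi : ℂ) * (1 - z * (starRingEnd ℂ) ζ) ^ 2)

open Metric Set
open scoped Real


lemma one_sub_ne {z ζ : ℂ} (hz : ‖z‖ < 1) (hζ : ‖ζ‖ ≤ 1) :
    (1 : ℂ) - z * (starRingEnd ℂ) ζ ≠ 0 := by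
  intro h
  have h1 : z * (starRingEnd ℂ) ζ = 1 := by linear_combination -h
  have : ‖z * (starRingEnd ℂ) ζ‖ < 1 := by
    rw [norm_mul, Complex.norm_conj]
    calc ‖z‖ * ‖ζ‖ ≤ ‖z‖ * 1 :=
          mul_le_mul_of_nonneg_left hζ (norm_nonneg z)
      _ = ‖z‖ := mul_one _
      _ < 1 := hz
  rw [h1] at this
  simp at this

lemma bergman_denom_ne {z ζ : ℂ} (hz : ‖z‖ < 1) (hζ : ‖ζ‖ ≤ 1) :
    (Real.pi : ℂ) * (1 - z * (starRingEnd ℂ) ζ) ^ 2 ≠ 0 := by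
  apply mul_ne_zero
  · exact_mod_cast Real.pi_ne_zero
  · exact pow_ne_zero 2 (one_sub_ne hz hζ)

lemma bergman_contOn (z : ℂ) (hz : ‖z‖ < 1) :
    ContinuousOn (bergman z) (closedBall (0:ℂ) 1) := by
  apply ContinuousOn.div continuousOn_const
  · exact continuousOn_const.mul ((continuousOn_const.sub
      (continuousOn_const.mul Complex.continuous_conj.continuousOn)).pow 2)
  · intro ζ hζ
    simp only [mem_closedBall, Complex.dist_eq, sub_zero] at hζ
    exact bergman_denom_ne hz hζ
lemma inner_circle (g : ℂ → ℂ) (hg : DifferentiableOn ℂ g (ball 0 1)) (z : ℂ)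
    (hz : ‖z‖ < 1) (r : ℝ) (hr0 : 0 < r) (hr1 : r < 1) :
    ∫ θ in (0:ℝ)..(2*Real.pi), bergman z (circleMap 0 r θ) * g (circleMap 0 r θ)
      = 2 * (g (z*r^2) + z*r^2 * deriv g (z*r^2)) := by
  set w₀ : ℂ := z * r^2 with hw₀def
  have hd : DifferentiableOn ℂ (fun w => w * g w) (ball 0 1) :=
    (differentiableOn_id).mul hg
  have hw₀r : ‖w₀‖ < r := by
    have : ‖w₀‖ = ‖z‖ * r^2 := by
      rw [hw₀def, norm_mul, ← Complex.ofReal_pow, Complex.norm_real,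
        Real.norm_of_nonneg (pow_pos hr0 2).le]
    rw [this]
    calc ‖z‖ * r^2 < 1 * r^2 := by
          apply mul_lt_mul_of_pos_right hz (pow_pos hr0 2)
      _ = r * r := by ring
      _ < 1 * r := by apply mul_lt_mul_of_pos_right hr1 hr0
      _ = r := one_mul r
  have hw₀ : w₀ ∈ ball (0:ℂ) r := by
    simpa [Complex.dist_eq] using hw₀r
  have hw₀1 : w₀ ∈ ball (0:ℂ) 1 := by
    have : ‖w₀‖ < 1 := hw₀r.trans hr1
    simpa [Complex.dist_eq] using this
  have key := two_pi_I_inv_smul_circleIntegral_sub_sq_inv_smul_of_differentiable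
    isOpen_ball (closedBall_subset_ball hr1) hd hw₀
  have hDeriv : deriv (fun w => w * g w) w₀ = g w₀ + w₀ * deriv g w₀ := by
    have hga : DifferentiableAt ℂ g w₀ := (hg.differentiableAt (isOpen_ball.mem_nhds hw₀1))
    have := deriv_fun_mul (differentiableAt_fun_id (x := w₀)) hga
    simpa using this
  have hpiI : (Real.pi : ℂ) * I ≠ 0 := by
    simp [Real.pi_ne_zero, I_ne_zero]
  have hcirc : (∮ w in C(0, r), ((w - w₀) ^ 2)⁻¹ • (w * g w))
      = (Real.pi : ℂ) * I *
        ∫ θ in (0:ℝ)..(2*Real.pi), bergman z (circleMap 0 r θ) * g (circleMap 0 r θ) := by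
    rw [circleIntegral, ← intervalIntegral.integral_const_mul]
    apply intervalIntegral.integral_congr
    intro θ _
    simp only [deriv_circleMap, smul_eq_mul]
    set w : ℂ := circleMap 0 r θ with hwdef
    have habsw : ‖w‖ = r := by
      rw [hwdef, norm_circleMap_zero, abs_of_pos hr0]
    have hwne : w ≠ 0 := by
      intro h
      rw [h, norm_zero] at habsw
      exact absurd habsw.symm (ne_of_gt hr0)
    have hww : w * (starRingEnd ℂ) w = (r:ℂ)^2 := by
      rw [Complex.mul_conj, Complex.normSq_eq_norm_sq, habsw]
      norm_cast
    have hsub : w - w₀ = (1 - z * (starRingEnd ℂ) w) * w := by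
      rw [hw₀def]; linear_combination z * hww
    have hAne : (1 - z * (starRingEnd ℂ) w) ≠ 0 := by
      intro h
      apply absurd hsub
      rw [h, zero_mul, sub_eq_zero]
      intro hcontra
      rw [← hcontra] at hw₀r
      exact lt_irrefl _ (habsw ▸ hw₀r)
    rw [hsub, bergman]
    have hpne : (Real.pi : ℂ) ≠ 0 := by
      exact_mod_cast Real.pi_ne_zero
    field_simp [hpne, hAne, hwne]
  have hoint : (∮ w in C(0, r), ((w - w₀) ^ 2)⁻¹ • (w * g w))
      = 2 * (Real.pi:ℂ) * I * (g w₀ + w₀ * deriv g w₀) := by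
    rw [← hDeriv, ← key, smul_eq_mul]
    have h2 : (2 * (Real.pi:ℂ) * I) ≠ 0 := by
      simp [Real.pi_ne_zero, I_ne_zero]
    field_simp
  apply mul_left_cancel₀ hpiI
  rw [← hcirc, hoint]
  ring
lemma ball_integral (g : ℂ → ℂ) (hg : DifferentiableOn ℂ g (ball 0 1)) (z : ℂ)
    (hz : ‖z‖ < 1) (s : ℝ) (hs0 : 0 < s) (hs1 : s < 1) :
    ∫ ζ in ball (0:ℂ) s, bergman z ζ * g ζ = (s:ℂ)^2 * g (z * s^2) := by
  set F : ℂ → ℂ := fun ζ => bergman z ζ * g ζ with hF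
  have hFcont : ContinuousOn F (ball 0 1) := by
    apply ContinuousOn.mul _ hg.continuousOn
    exact (bergman_contOn z hz).mono ball_subset_closedBall
  -- step 1: polar coordinates
  have hpolar := Complex.integral_comp_polarCoord_symm ((ball (0:ℂ) s).indicator F)
  rw [integral_indicator measurableSet_ball] at hpolar
  have htarget : polarCoord.target = Ioi (0:ℝ) ×ˢ Ioo (-π) π := rfl
  have hmemball : ∀ p : ℝ × ℝ, 0 < p.1 →
      (Complex.polarCoord.symm p ∈ ball (0:ℂ) s ↔ p.1 < s) := by
    intro p hp
    rw [mem_ball, Complex.dist_eq, sub_zero, Complex.norm_polarCoord_symm, abs_of_pos hp]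
  have hstep : (∫ p in polarCoord.target,
        p.1 • (ball (0:ℂ) s).indicator F (Complex.polarCoord.symm p))
      = ∫ p in Ioo (0:ℝ) s ×ˢ Ioo (-π) π, p.1 • F (Complex.polarCoord.symm p) := by
    have hcongr : ∀ p ∈ polarCoord.target,
        p.1 • (ball (0:ℂ) s).indicator F (Complex.polarCoord.symm p)
          = (Ioo (0:ℝ) s ×ˢ Ioo (-π) π).indicator
              (fun p => p.1 • F (Complex.polarCoord.symm p)) p := by
      intro p hp
      rw [htarget] at hp
      by_cases hps : p.1 < s
      · rw [indicator_of_mem ((hmemball p hp.1).2 hps), indicator_of_mem]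
        exact ⟨⟨hp.1, hps⟩, hp.2⟩
      · rw [indicator_of_notMem (fun hmem => hps ((hmemball p hp.1).1 hmem)),
          indicator_of_notMem (fun hmem => hps (Set.mem_prod.1 hmem).1.2), smul_zero]
    rw [setIntegral_congr_fun polarCoord.open_target.measurableSet hcongr,
      setIntegral_indicator (measurableSet_Ioo.prod measurableSet_Ioo), htarget,
      inter_eq_self_of_subset_right (Set.prod_mono Ioo_subset_Ioi_self subset_rfl)]
  -- Fubini
  have hsymmcont : Continuous (fun p : ℝ × ℝ => Complex.polarCoord.symm p) := by
    simp only [Complex.polarCoord_symm_apply]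
    fun_prop
  have hmaps : Set.MapsTo (fun p : ℝ × ℝ => Complex.polarCoord.symm p)
      (Icc (0:ℝ) s ×ˢ Icc (-π) π) (ball (0:ℂ) 1) := by
    intro p hp
    rw [mem_ball, Complex.dist_eq, sub_zero, Complex.norm_polarCoord_symm]
    rcases hp with ⟨hp1, _⟩
    rw [_root_.abs_of_nonneg hp1.1]
    exact lt_of_le_of_lt hp1.2 hs1
  have hGcont : ContinuousOn (fun p : ℝ × ℝ => p.1 • F (Complex.polarCoord.symm p))
      (Icc (0:ℝ) s ×ˢ Icc (-π) π) :=
    continuous_fst.continuousOn.smul (hFcont.comp hsymmcont.continuousOn hmaps)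
  have hGint : IntegrableOn (fun p : ℝ × ℝ => p.1 • F (Complex.polarCoord.symm p))
      (Ioo (0:ℝ) s ×ˢ Ioo (-π) π) :=
    (hGcont.integrableOn_compact (isCompact_Icc.prod isCompact_Icc)).mono_set
      (Set.prod_mono Ioo_subset_Icc_self Ioo_subset_Icc_self)
  have hfub := setIntegral_prod (fun p : ℝ × ℝ => p.1 • F (Complex.polarCoord.symm p)) hGint
  -- inner integral
  have hinner : ∀ x ∈ Ioo (0:ℝ) s,
      (∫ y in Ioo (-π) π, (x : ℝ) • F (Complex.polarCoord.symm (x, y)))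
        = x • (2 * (g (z*(x:ℂ)^2) + z*(x:ℂ)^2 * deriv g (z*(x:ℂ)^2))) := by
    intro x hx
    rw [integral_smul]
    congr 1
    have hsymmeq : ∀ y : ℝ, Complex.polarCoord.symm (x, y) = circleMap 0 x y := by
      intro y
      simp only [Complex.polarCoord_symm_apply, circleMap, Complex.ofReal_exp]
      push_cast
      rw [Complex.exp_mul_I]
      ring
    simp_rw [hsymmeq]
    have hper : Function.Periodic (fun y => F (circleMap 0 x y)) (2*π) := fun y => by
      show F (circleMap 0 x (y + 2*π)) = F (circleMap 0 x y)
      rw [periodic_circleMap 0 x y]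
    calc ∫ y in Ioo (-π) π, F (circleMap 0 x y)
        = ∫ y in Set.Ioc (-π) π, F (circleMap 0 x y) :=
          integral_Ioc_eq_integral_Ioo.symm
      _ = ∫ y in (-π)..π, F (circleMap 0 x y) :=
          (intervalIntegral.integral_of_le (by linarith [Real.pi_pos])).symm
      _ = ∫ y in (0:ℝ)..(2*π), F (circleMap 0 x y) := by
          have h2 := hper.intervalIntegral_add_eq (-π) 0
          rw [show -π + 2*π = π by ring, zero_add] at h2
          exact h2
      _ = 2 * (g (z*(x:ℂ)^2) + z*(x:ℂ)^2 * deriv g (z*(x:ℂ)^2)) :=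
          inner_circle g hg z hz x hx.1 (hx.2.trans hs1)
  -- outer integral via FTC
  have hgderivcont : ContinuousOn (deriv g) (ball (0:ℂ) 1) :=
    ((hg.analyticOnNhd isOpen_ball).deriv).continuousOn
  have hmapt : ∀ t : ℝ, t ∈ Set.uIcc 0 s → z*(t:ℂ)^2 ∈ ball (0:ℂ) 1 := by
    intro t ht
    rw [Set.uIcc_of_le hs0.le] at ht
    rw [mem_ball, Complex.dist_eq, sub_zero, norm_mul]
    have h1 : ‖(t:ℂ)^2‖ ≤ 1 := by
      rw [norm_pow, Complex.norm_real, Real.norm_eq_abs]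
      have : |t| ≤ 1 := by
        rw [_root_.abs_of_nonneg ht.1]
        linarith [ht.2]
      calc |t|^2 ≤ 1^2 := pow_le_pow_left₀ (abs_nonneg t) this 2
        _ = 1 := one_pow 2
    calc ‖z‖ * ‖(t:ℂ)^2‖ ≤ ‖z‖ * 1 :=
          mul_le_mul_of_nonneg_left h1 (norm_nonneg z)
      _ = ‖z‖ := mul_one _
      _ < 1 := hz
  have hFTC : (∫ t in (0:ℝ)..s,
        (t : ℂ) * (2 * (g (z*(t:ℂ)^2) + z*(t:ℂ)^2 * deriv g (z*(t:ℂ)^2))))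
      = (s:ℂ)^2 * g (z*(s:ℂ)^2) := by
    have hDer : ∀ t ∈ Set.uIcc (0:ℝ) s,
        HasDerivAt (fun t : ℝ => ((t:ℂ))^2 * g (z*(t:ℂ)^2))
          ((t : ℂ) * (2 * (g (z*(t:ℂ)^2) + z*(t:ℂ)^2 * deriv g (z*(t:ℂ)^2)))) t := by
      intro t ht
      have hin := hmapt t ht
      have hga : DifferentiableAt ℂ g (z*(t:ℂ)^2) :=
        hg.differentiableAt (isOpen_ball.mem_nhds hin)
      have hInner : HasDerivAt (fun w : ℂ => z*w^2) (z*(2*(t:ℂ))) (t:ℂ) := by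
        simpa using ((hasDerivAt_pow 2 ((t:ℂ))).const_mul z)
      have hComp : HasDerivAt (fun w : ℂ => g (z*w^2))
          (deriv g (z*(t:ℂ)^2) * (z*(2*(t:ℂ)))) (t:ℂ) := by
        have h2 := HasDerivAt.comp ((t:ℂ)) hga.hasDerivAt hInner
        exact h2
      have hProd : HasDerivAt (fun w : ℂ => w^2 * g (z*w^2))
          (2*(t:ℂ) * g (z*(t:ℂ)^2) + (t:ℂ)^2 * (deriv g (z*(t:ℂ)^2) * (z*(2*(t:ℂ))))) (t:ℂ) := by
        have := (hasDerivAt_pow 2 ((t:ℂ))).mul hComp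
        exact this.congr_deriv (by norm_num)
      have := hProd.comp_ofReal
      convert this using 1
      ring
    have hcont : ContinuousOn (fun t : ℝ =>
        (t : ℂ) * (2 * (g (z*(t:ℂ)^2) + z*(t:ℂ)^2 * deriv g (z*(t:ℂ)^2)))) (Set.uIcc 0 s) := by
      have hmap2 : ContinuousOn (fun t : ℝ => z*(t:ℂ)^2) (Set.uIcc 0 s) := by fun_prop
      have hg1 : ContinuousOn (fun t : ℝ => g (z*(t:ℂ)^2)) (Set.uIcc 0 s) :=
        hg.continuousOn.comp hmap2 hmapt
      have hg2 : ContinuousOn (fun t : ℝ => deriv g (z*(t:ℂ)^2)) (Set.uIcc 0 s) :=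
        hgderivcont.comp hmap2 hmapt
      apply ContinuousOn.mul Complex.continuous_ofReal.continuousOn
      exact continuousOn_const.mul (hg1.add (hmap2.mul hg2))
    have := intervalIntegral.integral_eq_sub_of_hasDerivAt hDer
      (hcont.intervalIntegrable)
    rw [this]
    push_cast
    ring
  rw [← hpolar, hstep]
  rw [MeasureTheory.Measure.volume_eq_prod] at hGint ⊢
  rw [setIntegral_prod _ hGint]
  rw [setIntegral_congr_fun measurableSet_Ioo (fun x hx => by simpa using hinner x hx),
    ← integral_Ioc_eq_integral_Ioo, ← intervalIntegral.integral_of_le hs0.le, hFTC]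

lemma reproduce (g : ℂ → ℂ) (hg : DifferentiableOn ℂ g (ball 0 1))
    (hL1 : IntegrableOn g (ball (0:ℂ) 1)) (z : ℂ) (hz : ‖z‖ < 1) :
    ∫ ζ in ball (0:ℂ) 1, bergman z ζ * g ζ = g z := by
  set F : ℂ → ℂ := fun ζ => bergman z ζ * g ζ with hF
  have hFcont : ContinuousOn F (ball 0 1) := by
    apply ContinuousOn.mul _ hg.continuousOn
    exact (bergman_contOn z hz).mono ball_subset_closedBall
  have hc : (0:ℝ) < 1 - ‖z‖ := by linarith
  set C : ℝ := (Real.pi * (1 - ‖z‖)^2)⁻¹ with hC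
  have hbound : ∀ ζ ∈ ball (0:ℂ) 1, ‖F ζ‖ ≤ C * ‖g ζ‖ := by
    intro ζ hζ
    rw [mem_ball, Complex.dist_eq, sub_zero] at hζ
    have h2 : ‖z * (starRingEnd ℂ) ζ‖ ≤ ‖z‖ := by
      rw [norm_mul, Complex.norm_conj]
      calc ‖z‖ * ‖ζ‖ ≤ ‖z‖ * 1 :=
            mul_le_mul_of_nonneg_left hζ.le (norm_nonneg z)
        _ = ‖z‖ := mul_one _
    have h1 : 1 - ‖z‖ ≤ ‖1 - z * (starRingEnd ℂ) ζ‖ := by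
      have h3 := norm_sub_norm_le (1:ℂ) (z * (starRingEnd ℂ) ζ)
      rw [norm_one] at h3
      linarith
    have hnormeq : ‖bergman z ζ‖
        = (Real.pi * (‖1 - z * (starRingEnd ℂ) ζ‖)^2)⁻¹ := by
      rw [bergman, norm_div, norm_one, one_div, norm_mul, Complex.norm_real,
        Real.norm_of_nonneg Real.pi_pos.le, norm_pow]
    have hnorm : ‖bergman z ζ‖ ≤ C := by
      rw [hnormeq, hC]
      apply inv_anti₀
      · positivity
      · apply mul_le_mul_of_nonneg_left _ Real.pi_pos.le
        exact pow_le_pow_left₀ hc.le h1 2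
    calc ‖F ζ‖ = ‖bergman z ζ‖ * ‖g ζ‖ := norm_mul _ _
      _ ≤ C * ‖g ζ‖ := mul_le_mul_of_nonneg_right hnorm (norm_nonneg _)
  have hFint : IntegrableOn F (ball (0:ℂ) 1) := by
    apply Integrable.mono' ((hL1.norm).const_mul C)
      (hFcont.aestronglyMeasurable measurableSet_ball)
    exact (ae_restrict_iff' measurableSet_ball).2 (ae_of_all _ hbound)
  set s : ℕ → ℝ := fun n => 1 - 1/(n+2) with hs
  have hs0 : ∀ n, 0 < s n := by
    intro n
    have h22 : (2:ℝ) ≤ (n:ℝ) + 2 := by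
      have := Nat.cast_nonneg (α := ℝ) n
      linarith
    have : 1/((n:ℝ)+2) ≤ 1/2 := one_div_le_one_div_of_le two_pos h22
    simp only [hs]
    linarith
  have hs1 : ∀ n, s n < 1 := by
    intro n
    have : 0 < 1/((n:ℝ)+2) := by positivity
    simp only [hs]
    linarith
  have hslim : Filter.Tendsto s Filter.atTop (nhds 1) := by
    have h0' := (tendsto_one_div_add_atTop_nhds_zero_nat (𝕜 := ℝ)).comp (Filter.tendsto_add_atTop_nat 1)
    have h0 : Filter.Tendsto (fun n : ℕ => 1/((n:ℝ)+2)) Filter.atTop (nhds 0) := by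
      have heq : (fun n : ℕ => 1/((n:ℝ)+2))
          = (fun n : ℕ => 1 / ((n:ℝ) + 1)) ∘ fun a => a + 1 := by
        funext n
        simp only [Function.comp_apply]
        push_cast
        ring_nf
      rw [heq]
      exact h0'
    have h4 := Filter.Tendsto.sub (tendsto_const_nhds (x := (1:ℝ))) h0
    simp only [sub_zero] at h4
    exact h4
  have hmono : Monotone (fun n => ball (0:ℂ) (s n)) := by
    intro m n hmn
    apply ball_subset_ball
    have : 1/((n:ℝ)+2) ≤ 1/((m:ℝ)+2) := by
      apply one_div_le_one_div_of_le
      · positivity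
      · have := Nat.cast_le (α := ℝ).2 hmn
        linarith
    simp only [hs]
    linarith
  have hunion : (⋃ n, ball (0:ℂ) (s n)) = ball (0:ℂ) 1 := by
    apply Set.Subset.antisymm
    · exact Set.iUnion_subset fun n => ball_subset_ball (hs1 n).le
    · intro x hx
      rw [mem_ball, Complex.dist_eq, sub_zero] at hx
      obtain ⟨n, hn⟩ := exists_nat_one_div_lt (show (0:ℝ) < 1 - ‖x‖ by linarith)
      refine Set.mem_iUnion.2 ⟨n, ?_⟩
      rw [mem_ball, Complex.dist_eq, sub_zero]
      simp only [hs]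
      have : 1/((n:ℝ)+2) ≤ 1/((n:ℝ)+1) := by
        apply one_div_le_one_div_of_le
        · positivity
        · linarith
      linarith
  have htend := tendsto_setIntegral_of_monotone (fun n => measurableSet_ball) hmono
    (by rw [hunion]; exact hFint)
  rw [hunion] at htend
  have heval : ∀ n, (∫ ζ in ball (0:ℂ) (s n), F ζ)
      = ((s n : ℂ))^2 * g (z * (s n : ℂ)^2) :=
    fun n => ball_integral g hg z hz (s n) (hs0 n) (hs1 n)
  have htend2 : Filter.Tendsto (fun n => ((s n : ℂ))^2 * g (z * (s n : ℂ)^2))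
      Filter.atTop (nhds (g z)) := by
    have hzball : z ∈ ball (0:ℂ) 1 := by
      rw [mem_ball, Complex.dist_eq, sub_zero]; exact hz
    have hgc : ContinuousAt g z :=
      (hg.differentiableAt (isOpen_ball.mem_nhds hzball)).continuousAt
    have hcast : Filter.Tendsto (fun n => ((s n : ℂ))^2) Filter.atTop (nhds 1) := by
      have := (Complex.continuous_ofReal.tendsto 1).comp hslim
      have h2 := this.pow 2
      simpa using h2
    have harg : Filter.Tendsto (fun n => z * ((s n : ℂ))^2) Filter.atTop (nhds z) := by
      have := hcast.const_mul z
      simpa using this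
    have := (hgc.tendsto.comp harg)
    have h3 := hcast.mul this
    simpa using h3
  exact tendsto_nhds_unique (htend.congr heval) htend2


theorem reproducing_property_first_form
    (α σ : ℝ) (hα : α ∈ Set.Ioc (0 : ℝ) 1) (hσ : σ ∈ Set.Ioo (0 : ℝ) 1) (k : ℕ)
    (hk : ∀ z ∈ Omega, ek (k - 1) (z ^ (α : ℂ)) ≠ 0)
    (f g : ℂ → ℂ)
    (hf : DifferentiableOn ℂ f unitDisk)
    (hg : DifferentiableOn ℂ g unitDisk)
    (hext : ∀ z ∈ Omega, g z = Dfrac α σ k f z)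
    (hL2 : IntegrableOn (fun z => ‖g z‖ ^ 2) unitDisk) :
    ∀ z ∈ Omega,
      f z = -(((σ / (1 - σ) : ℝ)) : ℂ) *
          (deriv f z / ((α : ℂ) * z ^ ((α : ℂ) - 1) * ek (k - 1) (z ^ (α : ℂ)))) +
        (((1 / (1 - σ) : ℝ)) : ℂ) * ∫ ζ in unitDisk, bergman z ζ * g ζ := by
  have hdisk : unitDisk = ball (0:ℂ) 1 := by
    ext w
    simp [unitDisk, mem_ball, Complex.dist_eq]
  rw [hdisk] at hg hL2
  intro z hz
  have hz1 : ‖z‖ < 1 := hz.1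
  have hL1 : IntegrableOn g (ball (0:ℂ) 1) := by
    have hconst : IntegrableOn (fun _ : ℂ => (1:ℝ)) (ball (0:ℂ) 1) :=
      integrableOn_const measure_ball_lt_top.ne
    apply Integrable.mono' (hconst.add hL2)
      (hg.continuousOn.aestronglyMeasurable measurableSet_ball)
    apply (ae_restrict_iff' measurableSet_ball).2 (ae_of_all _ ?_)
    intro ζ _
    have h1 := norm_nonneg (g ζ)
    simp only [Pi.add_apply]
    nlinarith [sq_nonneg (‖g ζ‖ - 1)]
  have hrep := reproduce g hg hL1 z hz1
  have hDz := hext z hz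
  rw [hdisk, hrep, hDz, Dfrac]
  have hσ1 : (1:ℂ) - (σ:ℂ) ≠ 0 := by
    intro h
    have : ((1 - σ : ℝ) : ℂ) = 0 := by push_cast; linear_combination h
    have h2 : (1 - σ : ℝ) = 0 := by exact_mod_cast this
    have := hσ.2
    linarith
  rw [mul_div_assoc]
  set Q : ℂ := deriv f z / ((α : ℂ) * z ^ ((α : ℂ) - 1) * ek (k - 1) (z ^ (α : ℂ))) with hQ
  push_cast
  field_simp
  ring
end
end

section
/- Representation formula for the i-derivative across slices: let α ∈ (0,1], σ ∈ (0,1), k ∈ ℕ with e_{k−1}(z^α) ≠ 0 on Ω, let f : 𝔹 → ℍ be slice regular, and let 𝐢, 𝐣 ∈ 𝕊². Then for every z ∈ Ω (noting that Ω is invariant under complex conjugation), D^σ_{α,k,𝐣} f(φ_𝐣(z)) = (1/2)·(1 − 𝐣𝐢)·D^σ_{α,k,𝐢} f(φ_𝐢(z)) + (1/2)·(1 + 𝐣𝐢)·D^σ_{α,k,𝐢} f(φ_𝐢(conj(z))). -/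
set_option maxHeartbeats 1000000
set_option synthInstance.maxHeartbeats 200000


open MeasureTheory Complex Quaternion

noncomputable section

/-- The sphere of unit purely imaginary quaternions. -/
def Sph : Set (Quaternion ℝ) := {i : Quaternion ℝ | i.re = 0 ∧ ‖i‖ = 1}

/-- The real-algebra embedding `φ_𝐢 : ℂ → ℍ`, `x + i y ↦ x + y 𝐢`. -/
def phi (i : Quaternion ℝ) (z : ℂ) : Quaternion ℝ := (z.re : Quaternion ℝ) + z.im • i

/-- The open unit ball of the quaternions. -/
def ballH : Set (Quaternion ℝ) := {q : Quaternion ℝ | ‖q‖ < 1}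

/-- `E = 𝔹 \ (-1, 0]`: the unit ball minus the real segment `(-1, 0]`. -/
def Eset : Set (Quaternion ℝ) :=
  ballH \ {q : Quaternion ℝ | ∃ x : ℝ, -1 < x ∧ x ≤ 0 ∧ q = (x : Quaternion ℝ)}

/-- `f` is slice regular on `S`: real-differentiable and satisfying the
Cauchy–Riemann equation `∂f/∂x + 𝐢 ∂f/∂y = 0` on each slice. -/
def SliceRegularOn (f : Quaternion ℝ → Quaternion ℝ) (S : Set (Quaternion ℝ)) : Prop :=
  ∀ q ∈ S, DifferentiableAt ℝ f q ∧
    ∀ i ∈ Sph, (∃ x y : ℝ, q = (x : Quaternion ℝ) + y • i) →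
      fderiv ℝ f q 1 + i * fderiv ℝ f q i = 0

/-- The Cullen derivative `f' = ∂f/∂x`. -/
def cullen (f : Quaternion ℝ → Quaternion ℝ) (q : Quaternion ℝ) : Quaternion ℝ :=
  fderiv ℝ f q 1

/-- The 𝐢-generalized fractal-fractional derivative of a slice regular function,
read through the slice parametrization: `z ∈ Ω ↦ D^σ_{α,k,𝐢} f (φ_𝐢 z)`. -/
def DfracQ (α σ : ℝ) (k : ℕ) (i : Quaternion ℝ) (f : Quaternion ℝ → Quaternion ℝ)
    (z : ℂ) : Quaternion ℝ :=
  (1 - σ) • f (phi i z) +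
    σ • (phi i (((α : ℂ) * z ^ ((α : ℂ) - 1) * ek (k - 1) (z ^ (α : ℂ)))⁻¹) *
      cullen f (phi i z))

/-- The quaternionic Dirichlet-type norm `‖f‖_{𝔇,𝐢}`. -/
def DnormQ (α σ : ℝ) (k : ℕ) (i : Quaternion ℝ) (f : Quaternion ℝ → Quaternion ℝ) : ℝ :=
  Real.sqrt (α * ‖f ((1 / 2 : ℝ) : Quaternion ℝ)‖ ^ 2 +
    ∫ z in Omega, ‖DfracQ α σ k i f z‖ ^ 2)

/-- Membership in the quaternionic Dirichlet-type space `𝔇^σ_{α,k,𝐢}`. -/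
def MemDQ (α σ : ℝ) (k : ℕ) (i : Quaternion ℝ) (f : Quaternion ℝ → Quaternion ℝ) : Prop :=
  SliceRegularOn f Eset ∧ IntegrableOn (fun z => ‖DfracQ α σ k i f z‖ ^ 2) Omega

/-! ### Auxiliary material -/

namespace RepAux

lemma sph_normSq {i : Quaternion ℝ} (hi : i ∈ Sph) :
    i.imI ^ 2 + i.imJ ^ 2 + i.imK ^ 2 = 1 := by
  have h2 : Quaternion.normSq i = 1 := by
    rw [Quaternion.normSq_eq_norm_mul_self, hi.2, one_mul]
  rw [Quaternion.normSq_def', hi.1] at h2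
  nlinarith [h2]

lemma sph_mul_self {i : Quaternion ℝ} (hi : i ∈ Sph) : i * i = -1 := by
  have hn := sph_normSq hi
  have h0 := hi.1
  ext
  · simp [Quaternion.re_mul, h0]
    linear_combination -hn
  · simp [Quaternion.imI_mul, h0]
    ring
  · simp [Quaternion.imJ_mul, h0]
    ring
  · simp [Quaternion.imK_mul, h0]
    ring

lemma phi_add (i : Quaternion ℝ) (z w : ℂ) : phi i (z + w) = phi i z + phi i w := by
  simp only [phi, Complex.add_re, Complex.add_im, add_smul]
  push_cast
  abel

lemma phi_real (i : Quaternion ℝ) (x : ℝ) : phi i (x : ℂ) = (x : Quaternion ℝ) := by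
  simp [phi]

lemma phi_one (i : Quaternion ℝ) : phi i 1 = 1 := by simp [phi]

lemma phi_I (i : Quaternion ℝ) : phi i Complex.I = i := by simp [phi]

lemma coe_eq_smul_one (r : ℝ) : ((r : ℝ) : Quaternion ℝ) = r • (1 : Quaternion ℝ) := by
  ext <;> simp

lemma phi_smul_real (i : Quaternion ℝ) (r : ℝ) (z : ℂ) :
    phi i (r • z) = r • phi i z := by
  simp only [phi, Complex.smul_re, Complex.smul_im, smul_add, smul_smul, smul_eq_mul]
  rw [coe_eq_smul_one, coe_eq_smul_one, smul_smul]

lemma phi_mul {i : Quaternion ℝ} (hi : i ∈ Sph) (z w : ℂ) :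
    phi i (z * w) = phi i z * phi i w := by
  have hn := sph_normSq hi
  have h0 := hi.1
  ext
  · simp [phi, Quaternion.re_mul, Complex.mul_re, Complex.mul_im, h0]
    linear_combination (z.im * w.im) * hn
  · simp [phi, Quaternion.imI_mul, Complex.mul_re, Complex.mul_im, h0]
    ring
  · simp [phi, Quaternion.imJ_mul, Complex.mul_re, Complex.mul_im, h0]
    ring
  · simp [phi, Quaternion.imK_mul, Complex.mul_re, Complex.mul_im, h0]
    ring

lemma norm_phi {i : Quaternion ℝ} (hi : i ∈ Sph) (z : ℂ) : ‖phi i z‖ = ‖z‖ := by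
  have hn := sph_normSq hi
  have h0 := hi.1
  have h1 : ‖phi i z‖ = Real.sqrt (Quaternion.normSq (phi i z)) := by
    rw [Quaternion.normSq_eq_norm_mul_self, Real.sqrt_mul_self (norm_nonneg _)]
  rw [h1, Complex.norm_def, Complex.normSq_apply]
  congr 1
  simp only [phi, Quaternion.normSq_def', Quaternion.re_add, Quaternion.re_coe,
    Quaternion.re_smul, h0, Quaternion.imI_add, Quaternion.imI_coe, Quaternion.imI_smul,
    Quaternion.imJ_add, Quaternion.imJ_coe, Quaternion.imJ_smul, Quaternion.imK_add,
    Quaternion.imK_coe, Quaternion.imK_smul, smul_eq_mul, mul_zero, add_zero, zero_add]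
  ring_nf
  nlinarith [hn]

lemma mem_ballH_phi {i : Quaternion ℝ} (hi : i ∈ Sph) {z : ℂ}
    (hz : ‖z‖ < 1) : phi i z ∈ ballH := by
  show ‖phi i z‖ < 1
  rwa [norm_phi hi]

/-- key intertwining identity 1 -/
lemma key1 {i j : Quaternion ℝ} (hi : i ∈ Sph) (hj : j ∈ Sph) :
    (1 - j * i) * i = j * (1 - j * i) := by
  rw [sub_mul, one_mul, mul_assoc, sph_mul_self hi, mul_sub, mul_one, ← mul_assoc,
    sph_mul_self hj]
  simp only [mul_neg, mul_one, neg_mul, one_mul, sub_neg_eq_add, neg_neg]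
  exact add_comm i j

/-- key intertwining identity 2 -/
lemma key2 {i j : Quaternion ℝ} (hi : i ∈ Sph) (hj : j ∈ Sph) :
    (1 + j * i) * i = -(j * (1 + j * i)) := by
  rw [add_mul, one_mul, mul_assoc, sph_mul_self hi, mul_add, mul_one, ← mul_assoc,
    sph_mul_self hj]
  simp only [mul_neg, mul_one, neg_mul, one_mul, neg_add_rev, neg_neg]

lemma key3 {i j : Quaternion ℝ} (hi : i ∈ Sph) (hj : j ∈ Sph) (w : ℂ) :
    (1 - j * i) * phi i w = phi j w * (1 - j * i) := by
  simp only [phi, mul_add, add_mul, mul_smul_comm, smul_mul_assoc,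
    Quaternion.mul_coe_eq_smul, Quaternion.coe_mul_eq_smul, key1 hi hj, smul_add]

lemma key4 {i j : Quaternion ℝ} (hi : i ∈ Sph) (hj : j ∈ Sph) (w : ℂ) :
    (1 + j * i) * phi i ((starRingEnd ℂ) w) = phi j w * (1 + j * i) := by
  simp only [phi, Complex.conj_re, Complex.conj_im, neg_smul, mul_add, add_mul,
    mul_neg, mul_smul_comm, smul_mul_assoc, Quaternion.mul_coe_eq_smul,
    Quaternion.coe_mul_eq_smul, key2 hi hj, smul_neg, neg_neg, smul_add]
  abel

/-- The continuous `ℝ`-linear version of `phi`. -/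
def phiL (i : Quaternion ℝ) : ℂ →L[ℝ] Quaternion ℝ :=
  (Complex.reCLM.smulRight (1 : Quaternion ℝ)) + (Complex.imCLM.smulRight i)

lemma phiL_apply (i : Quaternion ℝ) (z : ℂ) : phiL i z = phi i z := by
  simp only [phiL, ContinuousLinearMap.add_apply, ContinuousLinearMap.smulRight_apply,
    Complex.reCLM_apply, Complex.imCLM_apply, phi]
  rw [coe_eq_smul_one]

/-- conjugation as a continuous `ℝ`-linear map on `ℂ`. -/
def conjL : ℂ →L[ℝ] ℂ := Complex.conjCLE.toContinuousLinearMap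

lemma conjL_apply (z : ℂ) : conjL z = (starRingEnd ℂ) z := rfl

/-- Extraction of the Cauchy–Riemann relation on a slice. -/
lemma cr_rel {f : Quaternion ℝ → Quaternion ℝ} (hf : SliceRegularOn f ballH)
    {i : Quaternion ℝ} (hi : i ∈ Sph) {z : ℂ} (hz : ‖z‖ < 1) :
    fderiv ℝ f (phi i z) i = i * fderiv ℝ f (phi i z) 1 := by
  have h := (hf _ (mem_ballH_phi hi hz)).2 i hi ⟨z.re, z.im, rfl⟩
  have h2 : i * (fderiv ℝ f (phi i z) 1) + i * (i * fderiv ℝ f (phi i z) i) = 0 := by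
    rw [← mul_add, h, mul_zero]
  rw [← mul_assoc, sph_mul_self hi, neg_one_mul, ← sub_eq_add_neg] at h2
  exact (sub_eq_zero.mp h2).symm

/-! ### The slice complex structure on ℍ -/

/-- `ℍ` viewed as a complex vector space through left multiplication by the slice `j`. -/
def HS (_j : {q : Quaternion ℝ // q ∈ Sph}) : Type := Quaternion ℝ

instance (j : {q : Quaternion ℝ // q ∈ Sph}) : NormedAddCommGroup (HS j) :=
  inferInstanceAs (NormedAddCommGroup (Quaternion ℝ))

instance (j : {q : Quaternion ℝ // q ∈ Sph}) : NormedSpace ℝ (HS j) :=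
  inferInstanceAs (NormedSpace ℝ (Quaternion ℝ))

instance (j : {q : Quaternion ℝ // q ∈ Sph}) : CompleteSpace (HS j) :=
  inferInstanceAs (CompleteSpace (Quaternion ℝ))

/-- `phi` as a ring homomorphism. -/
def phiRingHom (j : {q : Quaternion ℝ // q ∈ Sph}) : ℂ →+* Quaternion ℝ where
  toFun := phi j.1
  map_one' := phi_one j.1
  map_mul' := phi_mul j.2
  map_zero' := by simpa using phi_real j.1 0
  map_add' := phi_add j.1

instance (j : {q : Quaternion ℝ // q ∈ Sph}) : Module ℂ (HS j) :=
  Module.compHom (Quaternion ℝ) (phiRingHom j)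

/-- identity map `HS j → ℍ`. -/
def HS.toQ {j : {q : Quaternion ℝ // q ∈ Sph}} (q : HS j) : Quaternion ℝ := q

/-- identity map `ℍ → HS j`. -/
def HS.ofQ {j : {q : Quaternion ℝ // q ∈ Sph}} (q : Quaternion ℝ) : HS j := q

lemma HS_smul_def (j : {q : Quaternion ℝ // q ∈ Sph}) (z : ℂ) (q : HS j) :
    z • q = HS.ofQ (phi j.1 z * q.toQ) := rfl

instance (j : {q : Quaternion ℝ // q ∈ Sph}) : IsScalarTower ℝ ℂ (HS j) := by
  refine ⟨fun r z q => ?_⟩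
  show HS.ofQ (phi j.1 (r • z) * q.toQ) = HS.ofQ (r • (phi j.1 z * q.toQ))
  rw [phi_smul_real, smul_mul_assoc]

instance (j : {q : Quaternion ℝ // q ∈ Sph}) : NormedSpace ℂ (HS j) := by
  refine ⟨fun z q => ?_⟩
  show ‖phi j.1 z * q.toQ‖ ≤ ‖z‖ * ‖q.toQ‖
  rw [norm_mul, norm_phi j.2]

/-! ### The representation formula -/

lemma rep_formula {f : Quaternion ℝ → Quaternion ℝ} (hf : SliceRegularOn f ballH)
    {i j : Quaternion ℝ} (hi : i ∈ Sph) (hj : j ∈ Sph) {z : ℂ}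
    (hz : ‖z‖ < 1) :
    f (phi j z) = (1 / 2 : ℝ) • ((1 - j * i) * f (phi i z)) +
      (1 / 2 : ℝ) • ((1 + j * i) * f (phi i ((starRingEnd ℂ) z))) := by
  classical
  set jS : {q : Quaternion ℝ // q ∈ Sph} := ⟨j, hj⟩ with hjS
  set F : ℂ → HS jS := fun w =>
    (f (phi j w) - ((1 / 2 : ℝ) • ((1 - j * i) * f (phi i w)) +
      (1 / 2 : ℝ) • ((1 + j * i) * f (phi i ((starRingEnd ℂ) w)))) : Quaternion ℝ) with hF
  -- complex differentiability on the open unit ball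
  have hdiff : ∀ w ∈ Metric.ball (0 : ℂ) 1, DifferentiableAt ℂ F w := by
    intro w hw
    have hw1 : ‖w‖ < 1 := by simpa [Complex.norm_def] using mem_ball_zero_iff.mp hw
    have hwc1 : ‖((starRingEnd ℂ) w)‖ < 1 := by rwa [Complex.norm_conj]
    have hfa : DifferentiableAt ℝ f (phi j w) := (hf _ (mem_ballH_phi hj hw1)).1
    have hfb : DifferentiableAt ℝ f (phi i w) := (hf _ (mem_ballH_phi hi hw1)).1
    have hfc : DifferentiableAt ℝ f (phi i ((starRingEnd ℂ) w)) :=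
      (hf _ (mem_ballH_phi hi hwc1)).1
    set A := fderiv ℝ f (phi j w) with hA
    set B := fderiv ℝ f (phi i w) with hB
    set C := fderiv ℝ f (phi i ((starRingEnd ℂ) w)) with hC
    have h1 : HasFDerivAt (fun w => f (phi j w)) (A.comp (phiL j)) w := by
      have := HasFDerivAt.comp w ((phiL_apply j w) ▸ hfa.hasFDerivAt) ((phiL j).hasFDerivAt)
      simpa [Function.comp_def, phiL_apply] using this
    have h2 : HasFDerivAt (fun w => f (phi i w)) (B.comp (phiL i)) w := by
      have := HasFDerivAt.comp w ((phiL_apply i w) ▸ hfb.hasFDerivAt) ((phiL i).hasFDerivAt)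
      simpa [Function.comp_def, phiL_apply] using this
    have h3 : HasFDerivAt (fun w => f (phi i ((starRingEnd ℂ) w)))
        (C.comp ((phiL i).comp conjL)) w := by
      have heq : ((phiL i).comp conjL) w = phi i ((starRingEnd ℂ) w) := by
        rw [ContinuousLinearMap.comp_apply, conjL_apply, phiL_apply]
      have := HasFDerivAt.comp w (heq ▸ hfc.hasFDerivAt)
        (((phiL i).comp conjL).hasFDerivAt)
      simpa [Function.comp_def, phiL_apply, conjL_apply] using this
    set L : ℂ →L[ℝ] Quaternion ℝ :=
      (A.comp (phiL j)) - ((1 / 2 : ℝ) • ((1 - j * i) • (B.comp (phiL i))) +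
        (1 / 2 : ℝ) • ((1 + j * i) • (C.comp ((phiL i).comp conjL)))) with hL
    have hFL : HasFDerivAt F L w := by
      exact h1.sub (((h2.const_mul (1 - j * i)).const_smul ((1:ℝ)/2)).add
        ((h3.const_mul (1 + j * i)).const_smul ((1:ℝ)/2)))
    have hFreal : DifferentiableAt ℝ F w := hFL.differentiableAt
    -- evaluate L at 1 and I
    have hevals : ∀ v : ℂ, L v = A (phi j v) -
        ((1 / 2 : ℝ) • ((1 - j * i) * B (phi i v)) +
         (1 / 2 : ℝ) • ((1 + j * i) * C (phi i ((starRingEnd ℂ) v)))) := by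
      intro v
      simp only [hL, ContinuousLinearMap.coe_sub', Pi.sub_apply,
        ContinuousLinearMap.add_apply, ContinuousLinearMap.coe_smul', Pi.smul_apply,
        ContinuousLinearMap.smul_apply, ContinuousLinearMap.comp_apply, phiL_apply,
        conjL_apply, smul_eq_mul]
    -- Cauchy-Riemann relations
    have hAcr : A j = j * A 1 := by rw [hA]; exact cr_rel hf hj hw1
    have hBcr : B i = i * B 1 := by rw [hB]; exact cr_rel hf hi hw1
    have hCcr : C i = i * C 1 := by rw [hC]; exact cr_rel hf hi hwc1
    -- the key linearity computation : L I = j * L 1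
    have hkey : L Complex.I = j * L 1 := by
      rw [hevals, hevals]
      have e1 : phi j Complex.I = j := phi_I j
      have e2 : phi i Complex.I = i := phi_I i
      have e3 : phi j (1 : ℂ) = 1 := phi_one j
      have e4 : phi i (1 : ℂ) = 1 := phi_one i
      have e5 : phi i ((starRingEnd ℂ) Complex.I) = -i := by
        simp [phi]
      have e6 : phi i ((starRingEnd ℂ) (1 : ℂ)) = 1 := by
        simpa using phi_one i
      rw [e1, e2, e3, e4, e5, e6, map_neg, hAcr, hBcr, hCcr]
      have t1 : (1 - j * i) * (i * B 1) = j * ((1 - j * i) * B 1) := by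
        rw [← mul_assoc, key1 hi hj, mul_assoc]
      have t2 : (1 + j * i) * -(i * C 1) = j * ((1 + j * i) * C 1) := by
        rw [mul_neg, ← mul_assoc, key2 hi hj, neg_mul, neg_neg, mul_assoc]
      rw [t1, t2, mul_sub, mul_add, mul_smul_comm, mul_smul_comm]
    -- conclude complex differentiability
    rw [differentiableAt_iff_restrictScalars ℝ hFreal]
    refine ⟨ContinuousLinearMap.smulRight (ContinuousLinearMap.id ℂ ℂ) (HS.ofQ (L 1)), ?_⟩
    have hfd : fderiv ℝ F w = L := hFreal.hasFDerivAt.unique hFL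
    rw [hfd]
    ext v
    show v • (HS.ofQ (L 1) : HS jS) = HS.ofQ (L v)
    rw [HS_smul_def]
    show HS.ofQ (phi j v * L 1) = HS.ofQ (L v)
    have hv : v = v.re • (1 : ℂ) + v.im • Complex.I := by
      simp [Complex.real_smul, Complex.re_add_im]
    have hmain : phi j v * L 1 = L v :=
      calc phi j v * L 1 = (v.re • (1 : Quaternion ℝ) + v.im • j) * L 1 := by
            rw [phi, coe_eq_smul_one]
        _ = v.re • L 1 + v.im • (j * L 1) := by
            rw [add_mul, smul_mul_assoc, smul_mul_assoc, one_mul]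
        _ = v.re • L 1 + v.im • L Complex.I := by rw [hkey]
        _ = L v := by
            conv_rhs => rw [hv]
            simp only [map_add, ContinuousLinearMap.map_smul]
    rw [hmain]
  -- F vanishes at real points of the ball
  have hF0 : ∀ x : ℝ, |x| < 1 → F ((x : ℝ) : ℂ) = 0 := by
    intro x hx
    have h1 : ‖((x : ℝ) : ℂ)‖ < 1 := by rwa [Complex.norm_real, Real.norm_eq_abs]
    show (f (phi j ((x:ℝ):ℂ)) - ((1 / 2 : ℝ) • ((1 - j * i) * f (phi i ((x:ℝ):ℂ))) +
      (1 / 2 : ℝ) • ((1 + j * i) * f (phi i ((starRingEnd ℂ) ((x:ℝ):ℂ))))) : Quaternion ℝ) = 0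
    rw [Complex.conj_ofReal, phi_real, phi_real]
    set q := f ((x : ℝ) : Quaternion ℝ)
    have : (1 / 2 : ℝ) • ((1 - j * i) * q) + (1 / 2 : ℝ) • ((1 + j * i) * q) = q := by
      rw [← smul_add, ← add_mul]
      have h2 : (1 - j * i) + (1 + j * i) = (2 : Quaternion ℝ) := by
        rw [sub_add_add_cancel]
        norm_num
      rw [h2]
      have h3 : (2 : Quaternion ℝ) * q = (2 : ℝ) • q := by
        rw [two_mul, two_smul]
      rw [h3, smul_smul]
      norm_num
    rw [this, sub_self]
  -- identity theorem
  have han : AnalyticOnNhd ℂ F (Metric.ball (0 : ℂ) 1) :=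
    DifferentiableOn.analyticOnNhd
      (fun w hw => (hdiff w hw).differentiableWithinAt) Metric.isOpen_ball
  have hhalf : ((1 / 2 : ℂ)) ∈ Metric.ball (0 : ℂ) 1 := by
    rw [mem_ball_zero_iff]
    norm_num
  have hfreq : ∃ᶠ w in nhdsWithin ((1:ℂ)/2) {((1:ℂ)/2)}ᶜ, F w = 0 := by
    have hu : ∀ n : ℕ, F ((((1:ℝ)/2 + ((n : ℝ) + 3)⁻¹ : ℝ)) : ℂ) = 0 := by
      intro n
      apply hF0
      have h3 : ((n : ℝ) + 3)⁻¹ ≤ 1/3 := by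
        rw [inv_le_comm₀ (by positivity) (by norm_num)]
        norm_num
      have h4 : (0:ℝ) < ((n : ℝ) + 3)⁻¹ := by positivity
      rw [abs_lt]
      constructor <;> nlinarith
    have htend : Filter.Tendsto (fun n : ℕ => ((((1:ℝ)/2 + ((n : ℝ) + 3)⁻¹ : ℝ)) : ℂ))
        Filter.atTop (nhdsWithin ((1:ℂ)/2) {((1:ℂ)/2)}ᶜ) := by
      apply tendsto_nhdsWithin_of_tendsto_nhds_of_eventually_within
      · have hr : Filter.Tendsto (fun n : ℕ => ((1:ℝ)/2 + ((n : ℝ) + 3)⁻¹)) Filter.atTop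
            (nhds ((1:ℝ)/2)) := by
          have : Filter.Tendsto (fun n : ℕ => ((n : ℝ) + 3)⁻¹) Filter.atTop (nhds 0) := by
            apply Filter.Tendsto.comp tendsto_inv_atTop_zero
            exact Filter.tendsto_atTop_add_const_right _ 3 tendsto_natCast_atTop_atTop
          simpa using tendsto_const_nhds.add this
        have hcast : ((1:ℂ)/2) = (((1:ℝ)/2 : ℝ) : ℂ) := by norm_num
        rw [hcast]
        exact (Complex.continuous_ofReal.tendsto ((1:ℝ)/2)).comp hr
      · apply Filter.Eventually.of_forall
        intro n
        simp only [Set.mem_compl_iff, Set.mem_singleton_iff]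
        intro hcon
        have h4 : (0:ℝ) < ((n : ℝ) + 3)⁻¹ := by positivity
        rw [show ((1:ℂ)/2) = (((1:ℝ)/2 : ℝ) : ℂ) by norm_num] at hcon
        have h5 : ((1:ℝ)/2 + ((n : ℝ) + 3)⁻¹) = (1:ℝ)/2 := Complex.ofReal_injective hcon
        linarith
    exact htend.frequently ((Filter.Eventually.of_forall hu).frequently)
  have hzero : Set.EqOn F 0 (Metric.ball (0 : ℂ) 1) :=
    han.eqOn_zero_of_preconnected_of_frequently_eq_zero
      (convex_ball (0:ℂ) 1).isPreconnected hhalf hfreq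
  have hzball : z ∈ Metric.ball (0 : ℂ) 1 := by
    rw [mem_ball_zero_iff]
    simpa using hz
  have := hzero hzball
  have hFz : (f (phi j z) - ((1 / 2 : ℝ) • ((1 - j * i) * f (phi i z)) +
      (1 / 2 : ℝ) • ((1 + j * i) * f (phi i ((starRingEnd ℂ) z)))) : Quaternion ℝ) = 0 := this
  exact sub_eq_zero.mp hFz

/-- The derivative of `t ↦ f (q + t)` at `0` is the Cullen derivative. -/
lemma hasDerivAt_slice (f : Quaternion ℝ → Quaternion ℝ) (q : Quaternion ℝ)
    (hd : DifferentiableAt ℝ f q) :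
    HasDerivAt (fun t : ℝ => f (q + ((t : ℝ) : Quaternion ℝ))) (cullen f q) 0 := by
  have h0 : HasDerivAt (fun t : ℝ => q + ((t : ℝ) : Quaternion ℝ)) 1 0 := by
    have : HasDerivAt (fun t : ℝ => t • (1 : Quaternion ℝ)) ((1:ℝ) • (1 : Quaternion ℝ)) 0 :=
      (hasDerivAt_id (0:ℝ)).smul_const (1 : Quaternion ℝ)
    have h2 : HasDerivAt (fun t : ℝ => q + t • (1 : Quaternion ℝ)) (1 : Quaternion ℝ) 0 := by
      simpa using this.const_add q
    have h3 : (fun t : ℝ => q + t • (1 : Quaternion ℝ)) =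
        (fun t : ℝ => q + ((t : ℝ) : Quaternion ℝ)) := by
      funext t
      rw [coe_eq_smul_one]
    rwa [h3] at h2
  have h4 : HasFDerivAt f (fderiv ℝ f q) (q + ((0:ℝ) : Quaternion ℝ)) := by
    simpa using hd.hasFDerivAt
  have := h4.comp_hasDerivAt 0 h0
  simpa [cullen, Function.comp_def] using this

/-- Representation formula for the Cullen derivative. -/
lemma rep_cullen {f : Quaternion ℝ → Quaternion ℝ} (hf : SliceRegularOn f ballH)
    {i j : Quaternion ℝ} (hi : i ∈ Sph) (hj : j ∈ Sph) {z : ℂ}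
    (hz : ‖z‖ < 1) :
    cullen f (phi j z) = (1 / 2 : ℝ) • ((1 - j * i) * cullen f (phi i z)) +
      (1 / 2 : ℝ) • ((1 + j * i) * cullen f (phi i ((starRingEnd ℂ) z))) := by
  have hzc : ‖((starRingEnd ℂ) z)‖ < 1 := by rwa [Complex.norm_conj]
  have hG : HasDerivAt (fun t : ℝ => f (phi j z + ((t : ℝ) : Quaternion ℝ)))
      (cullen f (phi j z)) 0 :=
    hasDerivAt_slice f _ (hf _ (mem_ballH_phi hj hz)).1
  have hHb : HasDerivAt (fun t : ℝ => f (phi i z + ((t : ℝ) : Quaternion ℝ)))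
      (cullen f (phi i z)) 0 :=
    hasDerivAt_slice f _ (hf _ (mem_ballH_phi hi hz)).1
  have hHc : HasDerivAt (fun t : ℝ => f (phi i ((starRingEnd ℂ) z) + ((t : ℝ) : Quaternion ℝ)))
      (cullen f (phi i ((starRingEnd ℂ) z))) 0 :=
    hasDerivAt_slice f _ (hf _ (mem_ballH_phi hi hzc)).1
  have hH : HasDerivAt (fun t : ℝ =>
      (1 / 2 : ℝ) • ((1 - j * i) * f (phi i z + ((t : ℝ) : Quaternion ℝ))) +
      (1 / 2 : ℝ) • ((1 + j * i) * f (phi i ((starRingEnd ℂ) z) + ((t : ℝ) : Quaternion ℝ))))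
      ((1 / 2 : ℝ) • ((1 - j * i) * cullen f (phi i z)) +
       (1 / 2 : ℝ) • ((1 + j * i) * cullen f (phi i ((starRingEnd ℂ) z)))) 0 :=
    ((hHb.const_mul (1 - j * i)).const_smul ((1:ℝ)/2)).add
      ((hHc.const_mul (1 + j * i)).const_smul ((1:ℝ)/2))
  -- the two functions agree near 0
  have heq : (fun t : ℝ => f (phi j z + ((t : ℝ) : Quaternion ℝ))) =ᶠ[nhds (0:ℝ)]
      (fun t : ℝ =>
      (1 / 2 : ℝ) • ((1 - j * i) * f (phi i z + ((t : ℝ) : Quaternion ℝ))) +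
      (1 / 2 : ℝ) • ((1 + j * i) * f (phi i ((starRingEnd ℂ) z) + ((t : ℝ) : Quaternion ℝ)))) := by
    have hmem : {t : ℝ | |t| < 1 - ‖z‖} ∈ nhds (0:ℝ) := by
      have : (0:ℝ) < 1 - ‖z‖ := by linarith
      have h2 : {t : ℝ | |t| < 1 - ‖z‖} = Metric.ball (0:ℝ) (1 - ‖z‖) := by
        ext t
        simp [Metric.mem_ball, Real.dist_eq]
      rw [h2]
      exact Metric.ball_mem_nhds 0 this
    filter_upwards [hmem] with t ht
    have habs : ‖(z + (t : ℂ))‖ < 1 := by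
      calc ‖(z + (t : ℂ))‖ ≤ ‖z‖ + ‖((t : ℝ) : ℂ)‖ :=
            norm_add_le _ _
        _ = ‖z‖ + |t| := by rw [Complex.norm_real, Real.norm_eq_abs]
        _ < 1 := by
            have ht' : |t| < 1 - ‖z‖ := ht
            linarith
    have h5 := rep_formula hf hi hj habs
    have e1 : phi j (z + (t : ℂ)) = phi j z + ((t : ℝ) : Quaternion ℝ) := by
      rw [phi_add, phi_real]
    have e2 : phi i (z + (t : ℂ)) = phi i z + ((t : ℝ) : Quaternion ℝ) := by
      rw [phi_add, phi_real]
    have e3 : phi i ((starRingEnd ℂ) (z + (t : ℂ))) =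
        phi i ((starRingEnd ℂ) z) + ((t : ℝ) : Quaternion ℝ) := by
      rw [map_add, Complex.conj_ofReal, phi_add, phi_real]
    rw [e1, e2, e3] at h5
    exact h5
  have hG' := hG.congr_of_eventuallyEq heq.symm
  exact hG'.unique hH

/-- Conjugation compatibility for the fractional coefficient. -/
lemma conj_coeff (α : ℝ) (k : ℕ) {z : ℂ} (hz : z ∈ Omega) :
    ((α : ℂ) * ((starRingEnd ℂ) z) ^ ((α : ℂ) - 1) *
        ek (k - 1) (((starRingEnd ℂ) z) ^ (α : ℂ)))⁻¹ =
      (starRingEnd ℂ) (((α : ℂ) * z ^ ((α : ℂ) - 1) * ek (k - 1) (z ^ (α : ℂ)))⁻¹) := by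
  have harg : z.arg ≠ Real.pi := by
    intro h
    rw [Complex.arg_eq_pi_iff] at h
    have habs := hz.1
    have h1 : |z.re| ≤ ‖z‖ := Complex.abs_re_le_norm z
    exact hz.2 ⟨h.2, by cases abs_lt.mp (lt_of_le_of_lt h1 habs); linarith, le_of_lt h.1⟩
  have h1 : ((starRingEnd ℂ) z) ^ ((α : ℂ) - 1) = (starRingEnd ℂ) (z ^ ((α : ℂ) - 1)) := by
    have := Complex.conj_cpow z ((α : ℂ) - 1) harg
    rwa [map_sub, Complex.conj_ofReal, map_one] at this
  have h2 : ((starRingEnd ℂ) z) ^ ((α : ℂ)) = (starRingEnd ℂ) (z ^ ((α : ℂ))) := by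
    have := Complex.conj_cpow z ((α : ℂ)) harg
    rwa [Complex.conj_ofReal] at this
  have h3 : ek (k - 1) ((starRingEnd ℂ) (z ^ ((α : ℂ)))) =
      (starRingEnd ℂ) (ek (k - 1) (z ^ ((α : ℂ)))) := by
    simp only [ek, map_sum, map_div₀, map_pow, map_natCast]
  rw [h1, h2, h3, map_inv₀, map_mul, map_mul, Complex.conj_ofReal]

end RepAux

theorem representation_formula_for_derivative
    (α σ : ℝ) (hα : α ∈ Set.Ioc (0 : ℝ) 1) (hσ : σ ∈ Set.Ioo (0 : ℝ) 1) (k : ℕ)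
    (hk : ∀ z ∈ Omega, ek (k - 1) (z ^ (α : ℂ)) ≠ 0)
    (f : Quaternion ℝ → Quaternion ℝ) (hf : SliceRegularOn f ballH)
    (i j : Quaternion ℝ) (hi : i ∈ Sph) (hj : j ∈ Sph) :
    ∀ z ∈ Omega,
      DfracQ α σ k j f z =
        (1 / 2 : ℝ) • ((1 - j * i) * DfracQ α σ k i f z) +
          (1 / 2 : ℝ) • ((1 + j * i) * DfracQ α σ k i f ((starRingEnd ℂ) z)) := by
  intro z hz
  have hz1 : ‖z‖ < 1 := hz.1
  set c : ℂ := ((α : ℂ) * z ^ ((α : ℂ) - 1) * ek (k - 1) (z ^ (α : ℂ)))⁻¹ with hc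
  have hcoeff := RepAux.conj_coeff α k hz
  simp only [DfracQ, ← hc, hcoeff]
  have hrep := RepAux.rep_formula hf hi hj hz1
  have hrepc := RepAux.rep_cullen hf hi hj hz1
  rw [hrep, hrepc]
  have t1 : phi j c * ((1 / 2 : ℝ) • ((1 - j * i) * cullen f (phi i z)) +
      (1 / 2 : ℝ) • ((1 + j * i) * cullen f (phi i ((starRingEnd ℂ) z)))) =
      (1 / 2 : ℝ) • ((1 - j * i) * (phi i c * cullen f (phi i z))) +
      (1 / 2 : ℝ) • ((1 + j * i) * (phi i ((starRingEnd ℂ) c) *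
        cullen f (phi i ((starRingEnd ℂ) z)))) := by
    rw [mul_add, mul_smul_comm, mul_smul_comm, ← mul_assoc, ← mul_assoc,
      ← RepAux.key3 hi hj c, ← RepAux.key4 hi hj c, mul_assoc, mul_assoc]
  rw [t1]
  simp only [mul_add, mul_smul_comm, smul_add, smul_smul]
  module

end
end
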